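/- The constructed instance I' always admits a feasible matching. More specifically, for every set X' ⊆ X ∪ X̄ containing exactly one of {x_i, x̄_i} for each i ∈ [r], the matching M with M(v) = X' ∪ Y ∪ Ȳ ∪ D', where D' = {d_j : exactly two literals of C_j lie in X' ∪ Y ∪ Ȳ}, M(w) = {d}, M(a) = {r2} and M(b) = ({r1, r3} ∪ X ∪ X̄) ∖ X', is feasible. -/
import Mathlib


open scoped Classical

noncomputable section

/-- An SMTI-Diverse instance: students `S`, colleges `C`, types `T`.
Preferences are encoded by rank functions (smaller rank = more preferred);
ties are allowed.  `acc` is the (symmetric) acceptability relation, `tau`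
the 0/1 type vectors (encoded as `Bool`), `lq`/`uq` the lower/upper quota
vectors and `cap` the capacities. -/
structure SMTI (S C T : Type) [Fintype S] [Fintype C] [Fintype T] where
  acc : S → C → Prop
  tau : S → T → Bool
  rankS : S → C → ℕ
  rankC : C → S → ℕ
  lq : C → T → ℕ
  uq : C → T → ℕ
  cap : C → ℕ

namespace SMTI

variable {S C T : Type} [Fintype S] [Fintype C] [Fintype T]

/-- `f : S → Option C` encodes a matching: every assigned college is acceptable. -/
def IsMatching (I : SMTI S C T) (f : S → Option C) : Prop :=
  ∀ u w, f u = some w → I.acc u w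

/-- The set `M(w)` of students assigned to college `w`. -/
def assigned (I : SMTI S C T) (f : S → Option C) (w : C) : Finset S :=
  Finset.univ.filter fun u => f u = some w

/-- The number of students of type `z` assigned to `w`. -/
def typeLoad (I : SMTI S C T) (f : S → Option C) (w : C) (z : T) : ℕ :=
  ∑ u ∈ I.assigned f w, (I.tau u z).toNat

/-- Feasibility: capacities respected and quotas met at all colleges. -/
def Feasible (I : SMTI S C T) (f : S → Option C) : Prop :=
  ∀ w, (I.assigned f w).card ≤ I.cap w ∧
    ∀ z, I.lq w z ≤ I.typeLoad f w z ∧ I.typeLoad f w z ≤ I.uq w z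

/-- `u` strictly prefers `w` to its assigned college (in particular if unmatched). -/
def PrefersTo (I : SMTI S C T) (f : S → Option C) (u : S) (w : C) : Prop :=
  ∀ w', f u = some w' → I.rankS u w < I.rankS u w'

/-- `{u,w}` is a blocking pair of `f` witnessed by `U' ⊆ M(w)`. -/
def BlocksWith (I : SMTI S C T) (f : S → Option C) (u : S) (w : C) (U' : Finset S) : Prop :=
  f u ≠ some w ∧ I.acc u w ∧ I.PrefersTo f u w ∧
  U' ⊆ I.assigned f w ∧
  (∀ u' ∈ U', I.rankC w u < I.rankC w u') ∧
  (I.assigned f w \ U').card + 1 ≤ I.cap w ∧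
  ∀ z, I.lq w z ≤ (I.tau u z).toNat + ∑ u' ∈ I.assigned f w \ U', (I.tau u' z).toNat ∧
    (I.tau u z).toNat + ∑ u' ∈ I.assigned f w \ U', (I.tau u' z).toNat ≤ I.uq w z

/-- `{u,w}` is a blocking pair of `f` (with some witness). -/
def BlockingPair (I : SMTI S C T) (f : S → Option C) (u : S) (w : C) : Prop :=
  ∃ U', I.BlocksWith f u w U'

/-- Stability: no blocking pair at all. -/
def Stable (I : SMTI S C T) (f : S → Option C) : Prop :=
  ∀ u w, ¬ I.BlockingPair f u w

end SMTI

section IPrimeConstruction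

/-- A literal: polarity (`true` = positive) and a variable
(`Sum.inl i` = `x_{i+1} ∈ X`, `Sum.inr i` = `y ∈ Y`). -/
abbrev XLit (r : ℕ) := Bool × (Fin r ⊕ Fin r)

/-- Students of `I'`: literal students `Sum.inl l`; clause students
`d_j = Sum.inr (Sum.inl j)`; special students `d = Sum.inr (Sum.inr 0)`,
`r1 = Sum.inr (Sum.inr 1)`, `r2 = Sum.inr (Sum.inr 2)`, `r3 = Sum.inr (Sum.inr 3)`. -/
abbrev StP (r s : ℕ) := XLit r ⊕ (Fin s ⊕ Fin 4)

/-- Colleges of `I'`: `v = 0`, `w = 1`, `a = 2`, `b = 3`. -/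
abbrev ColP := Fin 4

/-- Types of `I'`: variable types (`X` on the left, `Y` on the right),
clause types, and two special types. -/
abbrev TyP (r s : ℕ) := (Fin r ⊕ Fin r) ⊕ (Fin s ⊕ Fin 2)

/-- Truth value of a literal under assignments `σX`, `σY`. -/
def evalXLit {r : ℕ} (σX σY : Fin r → Bool) (l : XLit r) : Bool :=
  if l.1 then Sum.elim σX σY l.2 else !(Sum.elim σX σY l.2)

/-- Block index of a student in college `v`'s preference list:
`[D] ≻ d ≻ [Y] ≻ [Ȳ] ≻ [X̄] ≻ [X]`. -/
def blockV (r s : ℕ) : StP r s → ℕ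
  | Sum.inr (Sum.inl _) => 0
  | Sum.inr (Sum.inr k) => if k = 0 then 1 else 9
  | Sum.inl (pol, Sum.inr _) => if pol then 2 else 3
  | Sum.inl (pol, Sum.inl _) => if pol then 5 else 4

/-- Block index of a student in college `b`'s preference list:
`r3 ≻ r2 ≻ r1 ≻ [X] ≻ [X̄]`. -/
def blockB (r s : ℕ) : StP r s → ℕ
  | Sum.inr (Sum.inr k) => if k = 3 then 0 else if k = 2 then 1 else if k = 1 then 2 else 9
  | Sum.inl (pol, Sum.inl _) => if pol then 3 else 4
  | _ => 9

/-- `rk` realizes an "arbitrary fixed strict order within the blocks" given by `blk`. -/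
def RealizesBlocks {r s : ℕ} (blk : StP r s → ℕ) (rk : StP r s → ℕ) : Prop :=
  Function.Injective rk ∧ ∀ s1 s2 : StP r s, blk s1 < blk s2 → rk s1 < rk s2

/-- The quota vector of college `v`: `1^r 2^r 3^s 0 0` (both lower and upper). -/
def quotaV (r s : ℕ) : TyP r s → ℕ
  | Sum.inl (Sum.inl _) => 1
  | Sum.inl (Sum.inr _) => 2
  | Sum.inr (Sum.inl _) => 3
  | Sum.inr (Sum.inr _) => 0

/-- The instance `I'` from the Σ₂ᵖ-hardness construction, parameterized by the
clauses `cl` and by arbitrary fixed strict orders `rkV` (for `v`) and `rkB`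
(for `b`) within the blocks. -/
def IPrime (r s : ℕ) (cl : Fin s → Fin 3 → XLit r) (rkV rkB : StP r s → ℕ) :
    SMTI (StP r s) ColP (TyP r s) where
  acc := fun st c =>
    match st with
    | Sum.inl (_, Sum.inl _) => c = 0 ∨ c = 3        -- X-literal students: v and b
    | Sum.inl (_, Sum.inr _) => c = 0                -- Y-literal students: only v
    | Sum.inr (Sum.inl _) => c = 0                   -- clause students: only v
    | Sum.inr (Sum.inr k) =>
        if k = 0 then (c = 0 ∨ c = 1)                -- d: v and w
        else if k = 2 then (c = 1 ∨ c = 2 ∨ c = 3)   -- r2: b, w, a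
        else (c = 2 ∨ c = 3)                         -- r1, r3: a and b
  tau := fun st t =>
    match st, t with
    | Sum.inl l, Sum.inl vt => decide (l.2 = vt)
    | Sum.inl l, Sum.inr (Sum.inl j) => decide (∃ z : Fin 3, cl j z = l)
    | Sum.inl _, Sum.inr (Sum.inr _) => false
    | Sum.inr (Sum.inl _), Sum.inl _ => false
    | Sum.inr (Sum.inl j), Sum.inr (Sum.inl j') => decide (j = j')
    | Sum.inr (Sum.inl _), Sum.inr (Sum.inr _) => false
    | Sum.inr (Sum.inr k), Sum.inl _ => decide (k = 0)          -- d has all variable types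
    | Sum.inr (Sum.inr k), Sum.inr (Sum.inl _) => decide (k = 0) -- d has all clause types
    | Sum.inr (Sum.inr k), Sum.inr (Sum.inr z) =>
        -- special types: d : 00, r1 : 10, r2 : 11, r3 : 01
        if k = 1 then decide (z = 0)
        else if k = 2 then true
        else if k = 3 then decide (z = 1)
        else false
  rankS := fun st c =>
    match st with
    | Sum.inl (pol, Sum.inl _) =>
        -- x_i : v ≻ b ;  x̄_i : b ≻ v
        if pol then (if c = 0 then 0 else if c = 3 then 1 else 9)
        else (if c = 3 then 0 else if c = 0 then 1 else 9)
    | Sum.inl (_, Sum.inr _) => if c = 0 then 0 else 9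
    | Sum.inr (Sum.inl _) => if c = 0 then 0 else 9
    | Sum.inr (Sum.inr k) =>
        if k = 0 then (if c = 0 then 0 else if c = 1 then 1 else 9)       -- d : v ≻ w
        else if k = 1 then (if c = 3 then 0 else if c = 2 then 1 else 9)  -- r1 : b ≻ a
        else if k = 2 then
          (if c = 3 then 0 else if c = 1 then 1 else if c = 2 then 2 else 9) -- r2 : b ≻ w ≻ a
        else (if c = 2 then 0 else if c = 3 then 1 else 9)                -- r3 : a ≻ b
  rankC := fun c st =>
    if c = 0 then rkV st
    else if c = 1 then
      -- w : d ≻ r2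
      (if st = Sum.inr (Sum.inr 0) then 0 else if st = Sum.inr (Sum.inr 2) then 1 else 9)
    else if c = 2 then
      -- a : r1 ≻ r2 ≻ r3
      (if st = Sum.inr (Sum.inr 1) then 0 else if st = Sum.inr (Sum.inr 2) then 1
       else if st = Sum.inr (Sum.inr 3) then 2 else 9)
    else rkB st
  lq := fun c t =>
    if c = 0 then quotaV r s t
    else if c = 3 then (match t with | Sum.inl (Sum.inl _) => 1 | _ => 0)
    else 0
  uq := fun c t =>
    if c = 0 then quotaV r s t
    else if c = 1 then 1
    else if c = 2 then (match t with | Sum.inr (Sum.inr _) => 1 | _ => 0)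
    else (match t with
          | Sum.inl (Sum.inl _) => 1
          | Sum.inl (Sum.inr _) => 0
          | Sum.inr (Sum.inl _) => 1
          | Sum.inr (Sum.inr _) => 1)
  cap := fun c =>
    if c = 0 then 3 * r + s else if c = 1 then 1 else if c = 2 then 1 else r + 2

end IPrimeConstruction

/-- Whether literal `l` is "selected", i.e. its literal student goes to `v`:
`x_i ∈ X'` iff `g i = true`, `x̄_i ∈ X'` iff `g i = false`, and all
`Y`-literal students always go to `v`. -/
def selLit {r : ℕ} (g : Fin r → Bool) (l : XLit r) : Bool :=
  match l.2 with
  | Sum.inl i => l.1 == g i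
  | Sum.inr _ => true

/-- The matching of Statement 7: `M(v) = X' ∪ Y ∪ Ȳ ∪ D'` where
`D' = {d_j : exactly two literals of C_j lie in X' ∪ Y ∪ Ȳ}`, `M(w) = {d}`,
`M(a) = {r2}`, `M(b) = ({r1, r3} ∪ X ∪ X̄) ∖ X'`. -/
def matchSpec (r s : ℕ) (cl : Fin s → Fin 3 → XLit r) (g : Fin r → Bool) :
    StP r s → Option ColP := fun st =>
  match st with
  | Sum.inl l => if selLit g l then some 0 else some 3
  | Sum.inr (Sum.inl j) =>
      if (Finset.univ.filter fun z : Fin 3 => selLit g (cl j z) = true).card = 2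
      then some 0 else none
  | Sum.inr (Sum.inr k) => if k = 0 then some 1 else if k = 2 then some 2 else some 3

section Stmt7Proof

private lemma toNat_decide' (P : Prop) [Decidable P] : (decide P).toNat = if P then 1 else 0 := by
  by_cases h : P <;> simp [h]

private lemma sum_StP {r s : ℕ} (F : StP r s → ℕ) :
    ∑ u : StP r s, F u =
      ((∑ i : Fin r, (F (Sum.inl (true, Sum.inl i)) + F (Sum.inl (false, Sum.inl i)))) +
       (∑ i : Fin r, (F (Sum.inl (true, Sum.inr i)) + F (Sum.inl (false, Sum.inr i))))) +
      ((∑ j : Fin s, F (Sum.inr (Sum.inl j))) +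
       (F (Sum.inr (Sum.inr 0)) + F (Sum.inr (Sum.inr 1)) + F (Sum.inr (Sum.inr 2)) +
        F (Sum.inr (Sum.inr 3)))) := by
  rw [Fintype.sum_sum_type, Fintype.sum_prod_type_right (fun x => F (Sum.inl x)),
    Fintype.sum_sum_type (fun y => F (Sum.inr y)),
    Fintype.sum_sum_type (fun y => ∑ b : Bool, F (Sum.inl (b, y))),
    Fin.sum_univ_four (fun k => F (Sum.inr (Sum.inr k)))]
  simp [Fintype.sum_bool]

private lemma typeLoad_eq {r s : ℕ} (I : SMTI (StP r s) ColP (TyP r s))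
    (f : StP r s → Option ColP) (w : ColP) (z : TyP r s) :
    I.typeLoad f w z = ∑ u : StP r s, if f u = some w then (I.tau u z).toNat else 0 := by
  rw [SMTI.typeLoad, SMTI.assigned, Finset.sum_filter]
  exact Finset.sum_congr rfl fun u _ => by congr

private lemma card_assigned_eq {r s : ℕ} (I : SMTI (StP r s) ColP (TyP r s))
    (f : StP r s → Option ColP) (w : ColP) :
    (I.assigned f w).card = ∑ u : StP r s, if f u = some w then 1 else 0 := by
  rw [SMTI.assigned, Finset.card_filter]
  exact Finset.sum_congr rfl fun u _ => by congr

private lemma selLit_of_isRight {r : ℕ} (g : Fin r → Bool) (l : XLit r)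
    (h : l.2.isRight = true) : selLit g l = true := by
  unfold selLit
  rcases hl : l.2 with i | i
  · rw [hl] at h; simp at h
  · rfl

private lemma selLit_inl {r : ℕ} (g : Fin r → Bool) (b : Bool) (i : Fin r) :
    selLit g (b, Sum.inl i) = (b == g i) := rfl

private lemma selLit_inr {r : ℕ} (g : Fin r → Bool) (b : Bool) (i : Fin r) :
    selLit g (b, Sum.inr i) = true := rfl

private lemma cond_opt {c : Prop} [Decidable c] (a b w : ColP) :
    ((if c then (some a : Option ColP) else some b) = some w) ↔ (if c then a = w else b = w) := by
  split_ifs <;> simp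

private lemma cond_opt_none {c : Prop} [Decidable c] (a w : ColP) :
    ((if c then (some a : Option ColP) else none) = some w) ↔ (c ∧ a = w) := by
  split_ifs with h <;> simp [h]

private lemma lit_clause_sum {r s : ℕ} (cl : Fin s → Fin 3 → XLit r)
    (j : Fin s) (hj : Function.Injective (cl j)) (p : XLit r → Bool) :
    (∑ l : XLit r, if p l = true then (decide (∃ z : Fin 3, cl j z = l)).toNat else 0) =
      (Finset.univ.filter fun z : Fin 3 => p (cl j z) = true).card := by
  have h1 : ∀ l : XLit r,
      (if p l = true then (decide (∃ z : Fin 3, cl j z = l)).toNat else 0) =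
      if (p l = true ∧ ∃ z : Fin 3, cl j z = l) then 1 else 0 := by
    intro l
    by_cases h1 : p l = true <;> by_cases h2 : ∃ z : Fin 3, cl j z = l <;> simp [h1, h2]
  rw [Finset.sum_congr rfl fun l _ => h1 l, ← Finset.card_filter]
  have himg : (Finset.univ.filter fun l : XLit r => p l = true ∧ ∃ z : Fin 3, cl j z = l)
      = (Finset.univ.filter fun z : Fin 3 => p (cl j z) = true).image (cl j) := by
    ext l
    simp only [Finset.mem_filter, Finset.mem_univ, true_and, Finset.mem_image]
    constructor
    · rintro ⟨hp, z, rfl⟩; exact ⟨z, hp, rfl⟩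
    · rintro ⟨z, hz, rfl⟩; exact ⟨hz, z, rfl⟩
  rw [himg, Finset.card_image_of_injective _ hj]

private lemma mainFeasible (r s : ℕ) (cl : Fin s → Fin 3 → XLit r)
    (hY : ∀ j : Fin s, 2 ≤ (Finset.univ.filter fun z : Fin 3 => (cl j z).2.isRight = true).card)
    (hdist : ∀ j : Fin s, Function.Injective (cl j))
    (rkV rkB : StP r s → ℕ) (g : Fin r → Bool) :
    (IPrime r s cl rkV rkB).IsMatching (matchSpec r s cl g) ∧
    (IPrime r s cl rkV rkB).Feasible (matchSpec r s cl g) := by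
  constructor
  · intro u w h
    rcases u with ⟨b, i | i⟩ | j | k
    · simp only [matchSpec] at h
      split_ifs at h <;> rw [Option.some.injEq] at h <;> subst h <;> simp [IPrime]
    · simp [matchSpec, selLit_inr] at h
      subst h; simp [IPrime]
    · simp only [matchSpec] at h
      split_ifs at h
      rw [Option.some.injEq] at h; subst h; simp [IPrime]
    · fin_cases k <;> simp only [matchSpec] at h <;> simp at h <;> subst h <;> simp [IPrime]
  · have hcnt3 : ∀ j : Fin s,
        (Finset.univ.filter fun z : Fin 3 => selLit g (cl j z) = true).card ≤ 3 := by
      intro j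
      calc (Finset.univ.filter fun z : Fin 3 => selLit g (cl j z) = true).card
          ≤ (Finset.univ : Finset (Fin 3)).card := Finset.card_filter_le _ _
        _ = 3 := by simp
    have hcnt2 : ∀ j : Fin s,
        2 ≤ (Finset.univ.filter fun z : Fin 3 => selLit g (cl j z) = true).card := by
      intro j
      refine le_trans (hY j) (Finset.card_le_card ?_)
      intro z hz
      rw [Finset.mem_filter] at hz ⊢
      exact ⟨hz.1, selLit_of_isRight g _ hz.2⟩
    have h0 : ((IPrime r s cl rkV rkB).assigned (matchSpec r s cl g) 0).card
          ≤ (IPrime r s cl rkV rkB).cap 0 ∧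
        ∀ z, (IPrime r s cl rkV rkB).lq 0 z
            ≤ (IPrime r s cl rkV rkB).typeLoad (matchSpec r s cl g) 0 z ∧
          (IPrime r s cl rkV rkB).typeLoad (matchSpec r s cl g) 0 z
            ≤ (IPrime r s cl rkV rkB).uq 0 z := by
      constructor
      · rw [card_assigned_eq, sum_StP]
        simp [matchSpec, selLit_inl, selLit_inr, cond_opt, cond_opt_none, IPrime]
        have e1 : ∀ x : Fin r,
            ((if g x = true then 1 else 0) + if g x = false then 1 else 0) = 1 := by
          intro x; cases hx : g x <;> simp [hx]
        rw [Finset.sum_congr rfl fun x _ => e1 x, Finset.sum_const, smul_eq_mul,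
          Finset.card_univ, Fintype.card_fin]
        have e2 : (Finset.univ.filter fun x : Fin s =>
            (Finset.univ.filter fun z : Fin 3 => selLit g (cl x z) = true).card = 2).card ≤ s := by
          refine le_trans (Finset.card_filter_le _ _) ?_
          simp
        omega
      · intro z
        rcases z with (i0 | i0) | (j0 | z0)
        · have hl : (IPrime r s cl rkV rkB).typeLoad (matchSpec r s cl g) 0
              (Sum.inl (Sum.inl i0)) = 1 := by
            rw [typeLoad_eq, sum_StP]
            simp [matchSpec, selLit_inl, selLit_inr, cond_opt, cond_opt_none, IPrime,
              toNat_decide']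
            have e : ∀ x : Fin r,
                ((if g x = true then if x = i0 then 1 else 0 else 0) +
                  if g x = false then if x = i0 then 1 else 0 else 0)
                = if x = i0 then 1 else 0 := by
              intro x; cases hx : g x <;> simp [hx]
            rw [Finset.sum_congr rfl fun x _ => e x,
              Finset.sum_ite_eq' Finset.univ i0 fun _ => 1]
            simp
          rw [hl]; simp [IPrime, quotaV]
        · have hl : (IPrime r s cl rkV rkB).typeLoad (matchSpec r s cl g) 0
              (Sum.inl (Sum.inr i0)) = 2 := by
            rw [typeLoad_eq, sum_StP]
            simp [matchSpec, selLit_inl, selLit_inr, cond_opt, cond_opt_none, IPrime,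
              toNat_decide']
            have e : ∀ x : Fin r,
                (((if x = i0 then 1 else 0) + if x = i0 then 1 else 0 : ℕ))
                = if x = i0 then 2 else 0 := by
              intro x; by_cases hx : x = i0 <;> simp [hx]
            rw [Finset.sum_congr rfl fun x _ => e x,
              Finset.sum_ite_eq' Finset.univ i0 fun _ => 2]
            simp
          rw [hl]; simp [IPrime, quotaV]
        · have hl : (IPrime r s cl rkV rkB).typeLoad (matchSpec r s cl g) 0
              (Sum.inr (Sum.inl j0)) = 3 := by
            rw [typeLoad_eq, Fintype.sum_sum_type]
            have step : ∀ l : XLit r,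
                (if matchSpec r s cl g (Sum.inl l) = some 0 then
                  ((IPrime r s cl rkV rkB).tau (Sum.inl l) (Sum.inr (Sum.inl j0))).toNat else 0)
                = (if selLit g l = true then
                    (decide (∃ z : Fin 3, cl j0 z = l)).toNat else 0) := by
              intro l
              by_cases hsel : selLit g l = true <;> simp [matchSpec, hsel, IPrime]
            rw [Finset.sum_congr rfl fun l _ => step l,
              lit_clause_sum cl j0 (hdist j0) (selLit g)]
            rw [Fintype.sum_sum_type]
            simp [matchSpec, cond_opt_none, IPrime, toNat_decide']
            have e : ∀ x : Fin s,
                (if (Finset.filter (fun z => selLit g (cl x z) = true) Finset.univ).card = 2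
                  then if x = j0 then (1:ℕ) else 0 else 0)
                = if x = j0 then
                    (if (Finset.filter (fun z => selLit g (cl j0 z) = true) Finset.univ).card = 2
                      then 1 else 0) else 0 := by
              intro x; by_cases hx : x = j0
              · subst hx; simp
              · simp [hx]
            rw [Finset.sum_congr rfl fun x _ => e x,
              Finset.sum_ite_eq' Finset.univ j0, Fin.sum_univ_four]
            have h2 := hcnt2 j0
            have h3 := hcnt3 j0
            simp
            split_ifs <;> omega
          rw [hl]; simp [IPrime, quotaV]
        · have hl : (IPrime r s cl rkV rkB).typeLoad (matchSpec r s cl g) 0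
              (Sum.inr (Sum.inr z0)) = 0 := by
            rw [typeLoad_eq, sum_StP]
            simp [matchSpec, selLit_inl, selLit_inr, cond_opt, cond_opt_none, IPrime,
              toNat_decide']
          rw [hl]; simp [IPrime, quotaV]
    -- college 1
    have hass1 : (IPrime r s cl rkV rkB).assigned (matchSpec r s cl g) 1
        = {Sum.inr (Sum.inr 0)} := by
      ext u
      simp only [SMTI.assigned, Finset.mem_filter, Finset.mem_univ, true_and,
        Finset.mem_singleton]
      rcases u with ⟨b, i | i⟩ | j | k
      · simp [matchSpec, selLit_inl, cond_opt]
      · simp [matchSpec, selLit_inr]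
      · simp [matchSpec, cond_opt_none]
      · fin_cases k <;> simp [matchSpec]
    have h1 : ((IPrime r s cl rkV rkB).assigned (matchSpec r s cl g) 1).card
          ≤ (IPrime r s cl rkV rkB).cap 1 ∧
        ∀ z, (IPrime r s cl rkV rkB).lq 1 z
            ≤ (IPrime r s cl rkV rkB).typeLoad (matchSpec r s cl g) 1 z ∧
          (IPrime r s cl rkV rkB).typeLoad (matchSpec r s cl g) 1 z
            ≤ (IPrime r s cl rkV rkB).uq 1 z := by
      constructor
      · rw [hass1]; simp [IPrime]
      · intro z
        rw [SMTI.typeLoad, hass1, Finset.sum_singleton]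
        constructor
        · simp [IPrime]
        · have hb : ∀ b : Bool, b.toNat ≤ 1 := by decide
          exact le_trans (hb _) (by simp [IPrime])
    -- college 2
    have hass2 : (IPrime r s cl rkV rkB).assigned (matchSpec r s cl g) 2
        = {Sum.inr (Sum.inr 2)} := by
      ext u
      simp only [SMTI.assigned, Finset.mem_filter, Finset.mem_univ, true_and,
        Finset.mem_singleton]
      rcases u with ⟨b, i | i⟩ | j | k
      · simp [matchSpec, selLit_inl, cond_opt]
      · simp [matchSpec, selLit_inr]
      · simp [matchSpec, cond_opt_none]
      · fin_cases k <;> simp [matchSpec]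
    have h2 : ((IPrime r s cl rkV rkB).assigned (matchSpec r s cl g) 2).card
          ≤ (IPrime r s cl rkV rkB).cap 2 ∧
        ∀ z, (IPrime r s cl rkV rkB).lq 2 z
            ≤ (IPrime r s cl rkV rkB).typeLoad (matchSpec r s cl g) 2 z ∧
          (IPrime r s cl rkV rkB).typeLoad (matchSpec r s cl g) 2 z
            ≤ (IPrime r s cl rkV rkB).uq 2 z := by
      constructor
      · rw [hass2]; simp [IPrime]
      · intro z
        rw [SMTI.typeLoad, hass2, Finset.sum_singleton]
        constructor
        · simp [IPrime]
        · rcases z with (i | i) | (j | z2) <;> simp [IPrime]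
    -- college 3
    have h3 : ((IPrime r s cl rkV rkB).assigned (matchSpec r s cl g) 3).card
          ≤ (IPrime r s cl rkV rkB).cap 3 ∧
        ∀ z, (IPrime r s cl rkV rkB).lq 3 z
            ≤ (IPrime r s cl rkV rkB).typeLoad (matchSpec r s cl g) 3 z ∧
          (IPrime r s cl rkV rkB).typeLoad (matchSpec r s cl g) 3 z
            ≤ (IPrime r s cl rkV rkB).uq 3 z := by
      constructor
      · rw [card_assigned_eq, sum_StP]
        simp [matchSpec, selLit_inl, selLit_inr, cond_opt, cond_opt_none, IPrime]
        have e : ∀ x : Fin r,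
            ((if g x = false then 1 else 0) + if g x = true then 1 else 0) = 1 := by
          intro x; cases hx : g x <;> simp [hx]
        rw [Finset.sum_congr rfl fun x _ => e x, Finset.sum_const, smul_eq_mul,
          Finset.card_univ, Fintype.card_fin, mul_one]
      · intro z
        rcases z with (i0 | i0) | (j0 | z0)
        · have hl : (IPrime r s cl rkV rkB).typeLoad (matchSpec r s cl g) 3
              (Sum.inl (Sum.inl i0)) = 1 := by
            rw [typeLoad_eq, sum_StP]
            simp [matchSpec, selLit_inl, selLit_inr, cond_opt, cond_opt_none, IPrime,
              toNat_decide']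
            have e : ∀ x : Fin r,
                ((if g x = false then if x = i0 then 1 else 0 else 0) +
                  if g x = true then if x = i0 then 1 else 0 else 0)
                = if x = i0 then 1 else 0 := by
              intro x; cases hx : g x <;> simp [hx]
            rw [Finset.sum_congr rfl fun x _ => e x,
              Finset.sum_ite_eq' Finset.univ i0 fun _ => 1]
            simp
          rw [hl]; simp [IPrime]
        · have hl : (IPrime r s cl rkV rkB).typeLoad (matchSpec r s cl g) 3
              (Sum.inl (Sum.inr i0)) = 0 := by
            rw [typeLoad_eq, sum_StP]
            simp [matchSpec, selLit_inl, selLit_inr, cond_opt, cond_opt_none, IPrime,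
              toNat_decide']
          rw [hl]; simp [IPrime]
        · have hl : (IPrime r s cl rkV rkB).typeLoad (matchSpec r s cl g) 3
              (Sum.inr (Sum.inl j0)) ≤ 1 := by
            rw [typeLoad_eq, Fintype.sum_sum_type]
            have step : ∀ l : XLit r,
                (if matchSpec r s cl g (Sum.inl l) = some 3 then
                  ((IPrime r s cl rkV rkB).tau (Sum.inl l) (Sum.inr (Sum.inl j0))).toNat else 0)
                = (if (!selLit g l) = true then
                    (decide (∃ z : Fin 3, cl j0 z = l)).toNat else 0) := by
              intro l
              by_cases hsel : selLit g l = true <;> simp [matchSpec, hsel, IPrime]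
            rw [Finset.sum_congr rfl fun l _ => step l,
              lit_clause_sum cl j0 (hdist j0) (fun l => !selLit g l)]
            have e2 : (∑ a₂ : Fin s ⊕ Fin 4,
                if matchSpec r s cl g (Sum.inr a₂) = some 3 then
                  ((IPrime r s cl rkV rkB).tau (Sum.inr a₂) (Sum.inr (Sum.inl j0))).toNat
                else 0) = 0 := by
              rw [Fintype.sum_sum_type]
              simp [matchSpec, cond_opt_none, IPrime, toNat_decide']
              decide
            rw [e2]
            have hcompl : (Finset.univ.filter fun z : Fin 3 => (!selLit g (cl j0 z)) = true)
                = (Finset.univ.filter fun z : Fin 3 => ¬ (selLit g (cl j0 z) = true)) := by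
              apply Finset.filter_congr; intro z _; simp
            have hadd := Finset.card_filter_add_card_filter_not
              (s := (Finset.univ : Finset (Fin 3)))
              (p := fun z => selLit g (cl j0 z) = true)
            simp only [Finset.card_univ, Fintype.card_fin] at hadd
            have := hcnt2 j0
            rw [hcompl]
            omega
          constructor
          · simp [IPrime]
          · exact le_trans hl (by simp [IPrime])
        · have hl : (IPrime r s cl rkV rkB).typeLoad (matchSpec r s cl g) 3
              (Sum.inr (Sum.inr z0)) ≤ 1 := by
            rw [typeLoad_eq, sum_StP]
            simp [matchSpec, selLit_inl, selLit_inr, cond_opt, cond_opt_none, IPrime,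
              toNat_decide']
            fin_cases z0 <;> simp
          constructor
          · simp [IPrime]
          · exact le_trans hl (by simp [IPrime])
    intro w
    fin_cases w
    exacts [h0, h1, h2, h3]

end Stmt7Proof

/-- The instance `I'` always admits a feasible matching; more
specifically, for every choice `X'` (given by `g : Fin r → Bool`) of exactly one
of `{x_i, x̄_i}` for each `i`, the matching `matchSpec` is a feasible matching. -/
theorem stmt7 (r s : ℕ) (cl : Fin s → Fin 3 → XLit r)
    (hY : ∀ j : Fin s, 2 ≤ (Finset.univ.filter fun z : Fin 3 => (cl j z).2.isRight = true).card)
    (hdist : ∀ j : Fin s, Function.Injective (cl j))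
    (rkV rkB : StP r s → ℕ)
    (hV : RealizesBlocks (blockV r s) rkV) (hB : RealizesBlocks (blockB r s) rkB) :
    (∃ f : StP r s → Option ColP,
        (IPrime r s cl rkV rkB).IsMatching f ∧ (IPrime r s cl rkV rkB).Feasible f) ∧
    (∀ g : Fin r → Bool,
        (IPrime r s cl rkV rkB).IsMatching (matchSpec r s cl g) ∧
        (IPrime r s cl rkV rkB).Feasible (matchSpec r s cl g)) := by
  exact ⟨⟨matchSpec r s cl (fun _ => true),
    mainFeasible r s cl hY hdist rkV rkB (fun _ => true)⟩,
    fun g => mainFeasible r s cl hY hdist rkV rkB g⟩
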